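/- Let L_g be a real symmetric positive definite |F| × |F| matrix and let B = I_{|F|} ⊗ B1 + L_g ⊗ B2, where B1 = [[0,1],[0,0]] and B2 = [[0,0],[−1,−1]]. Then every complex eigenvalue μ of B has strictly negative real part. -/

import Mathlib

open scoped Kronecker Matrix

/-- The network formation dynamics matrix `B = I ⊗ B₁ + L_g ⊗ B₂` with unit control
gains, where `B₁ = [[0,1],[0,0]]` and `B₂ = [[0,0],[−1,−1]]`. -/
noncomputable def formationMatrix {F : Type*} [Fintype F] [DecidableEq F]
    (Lg : Matrix F F ℝ) : Matrix (F × Fin 2) (F × Fin 2) ℝ :=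
  (1 : Matrix F F ℝ) ⊗ₖ !![0, 1; 0, 0] + Lg ⊗ₖ !![0, 0; -1, -1]

/-- If `L_g` is real symmetric positive definite, then every complex eigenvalue
of `B = I ⊗ B₁ + L_g ⊗ B₂` has strictly negative real part. -/
theorem formationMatrix_eigenvalues_re_neg {F : Type*} [Fintype F] [DecidableEq F]
    (Lg : Matrix F F ℝ) (hPD : Lg.PosDef) :
    ∀ μ ∈ spectrum ℂ ((formationMatrix Lg).map (Complex.ofReal)), μ.re < 0 := by
  intro μ hμ
  set M := (formationMatrix Lg).map (Complex.ofReal) with hMdef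
  rw [spectrum.mem_iff] at hμ
  have hdet : (algebraMap ℂ (Matrix (F × Fin 2) (F × Fin 2) ℂ) μ - M).det = 0 := by
    by_contra h
    exact hμ ((Matrix.isUnit_iff_isUnit_det _).2 (Ne.isUnit h))
  obtain ⟨v, hv0, hv⟩ := Matrix.exists_mulVec_eq_zero_iff.2 hdet
  have hMv : M.mulVec v = μ • v := by
    rw [Algebra.algebraMap_eq_smul_one, Matrix.sub_mulVec, Matrix.smul_mulVec,
      Matrix.one_mulVec, sub_eq_zero] at hv
    exact hv.symm
  -- eigen equations
  have e0 : ∀ i, v (i, 1) = μ * v (i, 0) := by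
    intro i
    have h := congrFun hMv (i, 0)
    simp only [hMdef, formationMatrix, Matrix.mulVec, dotProduct, Matrix.map_apply,
      Matrix.add_apply, Matrix.kroneckerMap_apply, Fintype.sum_prod_type, Fin.sum_univ_two,
      Pi.smul_apply, smul_eq_mul, Matrix.one_apply, Matrix.cons_val', Matrix.cons_val_zero,
      Matrix.cons_val_one, Matrix.head_cons, Matrix.empty_val', Matrix.cons_val_fin_one,
      Matrix.head_fin_const, Matrix.of_apply] at h
    push_cast at h
    simpa [apply_ite Complex.ofReal, ite_mul, Finset.sum_ite_eq] using h
  have e1 : ∀ i, -(∑ j, (Lg i j : ℂ) * (v (j, 0) + v (j, 1))) = μ * v (i, 1) := by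
    intro i
    have h := congrFun hMv (i, 1)
    simp only [hMdef, formationMatrix, Matrix.mulVec, dotProduct, Matrix.map_apply,
      Matrix.add_apply, Matrix.kroneckerMap_apply, Fintype.sum_prod_type, Fin.sum_univ_two,
      Pi.smul_apply, smul_eq_mul, Matrix.one_apply, Matrix.cons_val', Matrix.cons_val_zero,
      Matrix.cons_val_one, Matrix.head_cons, Matrix.empty_val', Matrix.cons_val_fin_one,
      Matrix.head_fin_const, Matrix.of_apply] at h
    push_cast at h
    rw [← h]
    rw [← Finset.sum_neg_distrib]
    refine Finset.sum_congr rfl fun j _ => by ring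
  set x : F → ℂ := fun j => v (j, 0) with hxdef
  have hx0 : x ≠ 0 := by
    intro h
    apply hv0
    funext p
    obtain ⟨j, b⟩ := p
    fin_cases b
    · exact congrFun h j
    · show v (j, 1) = 0
      rw [e0 j]
      have : x j = 0 := congrFun h j
      rw [show v (j, 0) = x j from rfl, this, mul_zero]
  have key : ∀ i, (1 + μ) * (∑ j, (Lg i j : ℂ) * x j) = -(μ ^ 2) * x i := by
    intro i
    have h1 := e1 i
    rw [e0 i] at h1
    have h2 : ∑ j, (Lg i j : ℂ) * (v (j, 0) + v (j, 1))
        = (1 + μ) * ∑ j, (Lg i j : ℂ) * x j := by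
      rw [Finset.mul_sum]
      refine Finset.sum_congr rfl fun j _ => ?_
      rw [e0 j, show v (j, 0) = x j from rfl]
      ring
    rw [h2] at h1
    linear_combination -h1
  have hsum : (1 + μ) * (∑ i, (starRingEnd ℂ) (x i) * ∑ j, (Lg i j : ℂ) * x j)
      = -(μ ^ 2) * ∑ i, (starRingEnd ℂ) (x i) * x i := by
    rw [Finset.mul_sum, Finset.mul_sum]
    refine Finset.sum_congr rfl fun i _ => ?_
    linear_combination (starRingEnd ℂ) (x i) * key i
  set a : F → ℝ := fun j => (x j).re with hadef
  set b : F → ℝ := fun j => (x j).im with hbdef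
  have hterm : ∀ i j : F, (starRingEnd ℂ) (x i) * ((Lg i j : ℂ) * x j)
      = ((Lg i j * (a i * a j + b i * b j) : ℝ) : ℂ)
        + Complex.I * ((Lg i j * (a i * b j - b i * a j) : ℝ) : ℂ) := by
    intro i j
    have h1 : x i = (a i : ℂ) + (b i : ℂ) * Complex.I := (Complex.re_add_im (x i)).symm
    have h2 : x j = (a j : ℂ) + (b j : ℂ) * Complex.I := (Complex.re_add_im (x j)).symm
    rw [h1, h2]
    simp only [map_add, map_mul, Complex.conj_ofReal, Complex.conj_I]
    push_cast
    linear_combination (-(Lg i j : ℂ) * (b i : ℂ) * (b j : ℂ)) * Complex.I_sq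
  have hc : (∑ i, (starRingEnd ℂ) (x i) * ∑ j, (Lg i j : ℂ) * x j)
      = ((∑ i, ∑ j, Lg i j * (a i * a j + b i * b j) : ℝ) : ℂ)
        + Complex.I * ((∑ i, ∑ j, Lg i j * (a i * b j - b i * a j) : ℝ) : ℂ) := by
    push_cast
    simp only [Finset.mul_sum]
    rw [← Finset.sum_add_distrib]
    refine Finset.sum_congr rfl fun i _ => ?_
    rw [← Finset.sum_add_distrib]
    refine Finset.sum_congr rfl fun j _ => ?_
    have h := hterm i j
    push_cast at h
    linear_combination h
  have hsymm : ∀ i j, Lg j i = Lg i j := fun i j => hPD.1.apply i j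
  have hS2 : ∑ i, ∑ j, Lg i j * (a i * b j - b i * a j) = 0 := by
    have hcomm : ∑ i, ∑ j, Lg i j * (a i * b j - b i * a j)
        = ∑ j, ∑ i, Lg i j * (a i * b j - b i * a j) := Finset.sum_comm
    have hneg : ∑ j, ∑ i, Lg i j * (a i * b j - b i * a j)
        = -∑ i, ∑ j, Lg i j * (a i * b j - b i * a j) := by
      rw [← Finset.sum_neg_distrib]
      refine Finset.sum_congr rfl fun i _ => ?_
      rw [← Finset.sum_neg_distrib]
      refine Finset.sum_congr rfl fun j _ => ?_
      rw [hsymm i j]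
      ring
    linarith [hcomm.trans hneg]
  have hn : (∑ i, (starRingEnd ℂ) (x i) * x i) = ((∑ i, (a i ^ 2 + b i ^ 2) : ℝ) : ℂ) := by
    push_cast
    refine Finset.sum_congr rfl fun i _ => ?_
    have h1 : x i = (a i : ℂ) + (b i : ℂ) * Complex.I := (Complex.re_add_im (x i)).symm
    rw [h1]
    simp only [map_add, map_mul, Complex.conj_ofReal, Complex.conj_I]
    linear_combination (-(b i : ℂ) * (b i : ℂ)) * Complex.I_sq
  set S1 : ℝ := ∑ i, ∑ j, Lg i j * (a i * a j + b i * b j) with hS1def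
  set N : ℝ := ∑ i, (a i ^ 2 + b i ^ 2) with hNdef
  -- main complex equation
  have hmain : (1 + μ) * (S1 : ℂ) = -(μ ^ 2) * (N : ℂ) := by
    rw [← hn]
    have := hsum
    rw [hc, hS2] at this
    simpa using this
  -- positivity of N
  have hNpos : 0 < N := by
    obtain ⟨i, hi⟩ := Function.ne_iff.mp hx0
    refine Finset.sum_pos' (fun i _ => by positivity) ⟨i, Finset.mem_univ i, ?_⟩
    have : a i ≠ 0 ∨ b i ≠ 0 := by
      by_contra h
      push_neg at h
      exact hi (Complex.ext h.1 h.2)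
    rcases this with h | h
    · have h1 : 0 < a i ^ 2 := by positivity
      nlinarith [sq_nonneg (b i)]
    · have h1 : 0 < b i ^ 2 := by positivity
      nlinarith [sq_nonneg (a i)]
  -- positivity of S1
  have hquad : ∀ w : F → ℝ, ∑ i, ∑ j, Lg i j * (w i * w j) = w ⬝ᵥ Lg *ᵥ w := by
    intro w
    simp only [dotProduct, Matrix.mulVec, Finset.mul_sum]
    refine Finset.sum_congr rfl fun i _ => Finset.sum_congr rfl fun j _ => by ring
  have hS1split : S1 = (a ⬝ᵥ Lg *ᵥ a) + (b ⬝ᵥ Lg *ᵥ b) := by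
    rw [hS1def, ← hquad a, ← hquad b, ← Finset.sum_add_distrib]
    refine Finset.sum_congr rfl fun i _ => ?_
    rw [← Finset.sum_add_distrib]
    refine Finset.sum_congr rfl fun j _ => by ring
  have hS1pos : 0 < S1 := by
    rw [hS1split]
    have hab : a ≠ 0 ∨ b ≠ 0 := by
      by_contra h
      push_neg at h
      apply hx0
      funext j
      exact Complex.ext (congrFun h.1 j) (congrFun h.2 j)
    have hsa : ∀ w : F → ℝ, star w = w := fun w => rfl
    rcases hab with h | h
    · have h1 := hPD.dotProduct_mulVec_pos h
      have h2 := hPD.posSemidef.dotProduct_mulVec_nonneg b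
      rw [hsa] at h1 h2
      linarith
    · have h1 := hPD.dotProduct_mulVec_pos h
      have h2 := hPD.posSemidef.dotProduct_mulVec_nonneg a
      rw [hsa] at h1 h2
      linarith
  -- extract real and imaginary parts
  have hre := congrArg Complex.re hmain
  have him := congrArg Complex.im hmain
  simp only [Complex.add_re, Complex.add_im, Complex.mul_re, Complex.mul_im, Complex.one_re,
    Complex.one_im, Complex.neg_re, Complex.neg_im, Complex.ofReal_re, Complex.ofReal_im,
    pow_two, mul_zero, sub_zero, zero_mul, add_zero, zero_add, neg_zero] at hre him
  by_contra hp
  push_neg at hp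
  have hq : μ.im = 0 := by
    have h2 : μ.im * (S1 + 2 * μ.re * N) = 0 := by linear_combination him
    rcases mul_eq_zero.mp h2 with h | h
    · exact h
    · nlinarith
  rw [hq] at hre
  nlinarith [mul_nonneg hp hS1pos.le, mul_nonneg (mul_nonneg hp hp) hNpos.le]
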